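/- arXiv:2301.00471 — 3 statements merged into one kernel-verified Lean document; each statement's English description precedes it below -/
import Mathlib

section
/- Let k ∈ ℕ*, T > 0, B̃ ∈ M_d(ℂ), M̃ ∈ M_{d,m}(ℂ), and X₀ ∈ ℂ^d. Let w : [0,T] → ℂ^{mk} be of class C^{k−1} with w^{(j)}(0) = w^{(j)}(T) = 0 for all 0 ≤ j ≤ k−2. Write w = (w₁, …, w_k) with each w_j valued in ℂ^m, and set u := w₁ + w₂' + … + w_k^{(k−1)}. Let X, X̃ : [0,T] → ℂ^d be the solutions of X' = B̃X + [B̃|M̃]_k·w and X̃' = B̃X̃ + M̃·u with X(0) = X̃(0) = X₀, where [B̃|M̃]_k := (M̃, B̃M̃, …, B̃^{k−1}M̃) ∈ M_{d,km}(ℂ). Then X(T) = X̃(T). -/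
open MeasureTheory Real Set Matrix

noncomputable section

instance : Fact (0 < 2 * Real.pi) := ⟨by positivity⟩

/-- The one-dimensional torus `ℝ/(2πℤ)`. -/
abbrev Torus : Type := AddCircle (2 * Real.pi)

/-- The `n`-th Fourier coefficient of a vector-valued function on the torus. -/
def fCoeff {ι : Type*} (f : Torus → ι → ℂ) (n : ℤ) : ι → ℂ :=
  fun i => fourierCoeff (fun x => f x i) n

/-- The `n`-th Fourier coefficient of a real vector-valued function on the torus. -/
def fCoeffR {ι : Type*} (f : Torus → ι → ℝ) (n : ℤ) : ι → ℂ :=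
  fCoeff (fun x i => (f x i : ℂ)) n

/-- Membership in the Sobolev space `H^s` (square-summability of Fourier coefficients
with weight `(1+n²)^s`). -/
def memHs {ι : Type*} [Fintype ι] (s : ℝ) (f : Torus → ι → ℝ) : Prop :=
  Summable fun n : ℤ => (1 + (n : ℝ) ^ 2) ^ s * ∑ i, ‖fCoeffR f n i‖ ^ 2

/-- The matrix `B_n := -n² B - i n A - K`. -/
def BnMat {ι : Type*} [Fintype ι] [DecidableEq ι] (B A K : Matrix ι ι ℝ) (n : ℤ) :
    Matrix ι ι ℂ :=
  (-(n : ℂ) ^ 2) • B.map Complex.ofReal - (Complex.I * (n : ℂ)) • A.map Complex.ofReal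
    - K.map Complex.ofReal

/-- The `k`-block Kalman matrix `(M, BM, …, B^{k-1}M)`. -/
def kalman {ι : Type*} [Fintype ι] [DecidableEq ι] {m : ℕ} (B : Matrix ι ι ℂ)
    (M : Matrix ι (Fin m) ℂ) (k : ℕ) : Matrix ι (Fin k × Fin m) ℂ :=
  Matrix.of fun i p => (B ^ (p.1 : ℕ) * M) i p.2

/-- `ℓ(ω)`: supremum of the lengths of the connected components of the complement of `ω`. -/
def ellOmega (ω : Set Torus) : ℝ :=
  sSup {L : ℝ | ∃ x ∈ ωᶜ, L = (volume (connectedComponentIn ωᶜ x)).toReal}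

/-- `μ* := min { |μ| : μ ∈ Sp(A') }`. -/
def muStar {dh : ℕ} (A' : Matrix (Fin dh) (Fin dh) ℝ) : ℝ :=
  sInf ((‖·‖) '' spectrum ℂ (A'.map Complex.ofReal))

/-- `A'` is diagonalizable over `ℂ` with only real eigenvalues. -/
def IsDiagRealSpec {dh : ℕ} (A' : Matrix (Fin dh) (Fin dh) ℝ) : Prop :=
  ∃ (P : Matrix (Fin dh) (Fin dh) ℂ) (μ : Fin dh → ℝ),
    IsUnit P.det ∧ A'.map Complex.ofReal = P * Matrix.diagonal (fun i => (μ i : ℂ)) * P⁻¹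

/-- The control `u ∈ L²((0,T)×𝕋; ℝ^m)`, vanishing a.e. outside `ω`, steers the initial datum
`f₀` to `0` in time `T`, expressed frequency-by-frequency through Duhamel's formula. -/
def steers {ι : Type*} [Fintype ι] [DecidableEq ι] {m : ℕ}
    (B A K : Matrix ι ι ℝ) (M : Matrix ι (Fin m) ℝ) (ω : Set Torus) (T : ℝ)
    (f₀ : Torus → ι → ℝ) (u : ℝ → Torus → Fin m → ℝ) : Prop :=
  MemLp (fun p : ℝ × Torus => u p.1 p.2) 2 ((volume.restrict (Set.Ioo 0 T)).prod volume) ∧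
  (∀ᵐ p : ℝ × Torus ∂((volume.restrict (Set.Ioo 0 T)).prod volume),
      p.2 ∉ ω → u p.1 p.2 = 0) ∧
  ∀ n : ℤ,
    (NormedSpace.exp ((T : ℂ) • BnMat B A K n)).mulVec (fCoeffR f₀ n)
      + ∫ t in (0 : ℝ)..T,
          (NormedSpace.exp (((T - t : ℝ) : ℂ) • BnMat B A K n)).mulVec
            ((M.map Complex.ofReal).mulVec (fCoeffR (u t) n)) = 0

/-- Algebraic solvability lemma: if `X' = B̃X + [B̃|M̃]_k w` and
`X̃' = B̃X̃ + M̃u` with `u = w₁ + w₂' + ⋯ + w_k^{(k-1)}`, the same initial condition,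
and `w` of class `C^{k-1}` with derivatives up to order `k-2` vanishing at `0` and `T`,
then `X(T) = X̃(T)`. -/
theorem statement7
    (d m k : ℕ) (hk : 1 ≤ k) (T : ℝ) (hT : 0 < T)
    (Bt : Matrix (Fin d) (Fin d) ℂ) (Mt : Matrix (Fin d) (Fin m) ℂ)
    (X₀ : Fin d → ℂ) (w : ℝ → Fin k × Fin m → ℂ)
    (hw : ContDiff ℝ ((k - 1 : ℕ) : ℕ∞) w)
    (hwbd : ∀ j : ℕ, j + 2 ≤ k → iteratedDeriv j w 0 = 0 ∧ iteratedDeriv j w T = 0)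
    (X Xt : ℝ → Fin d → ℂ)
    (hX : ∀ t : ℝ, HasDerivAt X (Bt.mulVec (X t) + (kalman Bt Mt k).mulVec (w t)) t)
    (hX0 : X 0 = X₀)
    (hXt : ∀ t : ℝ, HasDerivAt Xt (Bt.mulVec (Xt t) +
      Mt.mulVec (∑ j : Fin k, iteratedDeriv (j : ℕ) (fun s i => w s (j, i)) t)) t)
    (hXt0 : Xt 0 = X₀) :
    X T = Xt T := by
  classical
  have hwj : ∀ j : Fin k, ContDiff ℝ ((k - 1 : ℕ) : ℕ∞) (fun s i => w s (j, i)) :=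
    fun j => contDiff_pi.2 fun i => contDiff_pi.1 hw (j, i)
  -- derivative of matrix-vector product compositions
  have mulVecD : ∀ {n : ℕ} (A : Matrix (Fin d) (Fin n) ℂ) (f : ℝ → Fin n → ℂ)
      (f' : Fin n → ℂ) (t : ℝ), HasDerivAt f f' t →
      HasDerivAt (fun s => A.mulVec (f s)) (A.mulVec f') t := by
    intro n A f f' t hf
    have := (LinearMap.toContinuousLinearMap
      ((Matrix.mulVecLin A).restrictScalars ℝ)).hasFDerivAt.comp_hasDerivAt t hf
    simpa [Function.comp_def] using this
  have mulVec_sum : ∀ {n : ℕ} (A : Matrix (Fin d) (Fin n) ℂ) {α : Type}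
      (s : Finset α) (v : α → Fin n → ℂ),
      A.mulVec (∑ x ∈ s, v x) = ∑ x ∈ s, A.mulVec (v x) := by
    intro n A α s v
    have h := map_sum (Matrix.mulVecLin A) v s
    simp only [Matrix.mulVecLin_apply] at h
    exact h
  -- derivatives of iterated derivatives of components
  have hder : ∀ (j : Fin k) (ℓ : ℕ), ℓ + 2 ≤ k → ∀ t : ℝ,
      HasDerivAt (iteratedDeriv ℓ (fun s i => w s (j, i)))
        (iteratedDeriv (ℓ + 1) (fun s i => w s (j, i)) t) t := by
    intro j ℓ hℓ t
    have h1 : (ℓ : WithTop ℕ∞) < ((k - 1 : ℕ) : ℕ∞) := by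
      exact_mod_cast (by omega : ℓ < k - 1)
    have hdi := ((hwj j).differentiable_iteratedDeriv ℓ h1) t
    rw [iteratedDeriv_succ]
    exact hdi.hasDerivAt
  -- iterated derivatives commute with component extraction
  have hcomm : ∀ (j : Fin k) (ℓ : ℕ), ℓ + 1 ≤ k → ∀ t : ℝ,
      iteratedDeriv ℓ (fun s i => w s (j, i)) t
        = fun i => iteratedDeriv ℓ w t (j, i) := by
    intro j ℓ
    induction ℓ with
    | zero => intro _ t; simp
    | succ ℓ ih =>
      intro hℓ t
      have h1 : (ℓ : WithTop ℕ∞) < ((k - 1 : ℕ) : ℕ∞) := by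
        exact_mod_cast (by omega : ℓ < k - 1)
      have hd : HasDerivAt (iteratedDeriv ℓ w) (iteratedDeriv (ℓ + 1) w t) t := by
        rw [iteratedDeriv_succ]
        exact ((hw.differentiable_iteratedDeriv ℓ h1) t).hasDerivAt
      set L : ((Fin k × Fin m) → ℂ) →L[ℝ] (Fin m → ℂ) :=
        ContinuousLinearMap.pi (fun i : Fin m => ContinuousLinearMap.proj (j, i)) with hL
      have h2 : HasDerivAt (fun s => L (iteratedDeriv ℓ w s))
          (L (iteratedDeriv (ℓ + 1) w t)) t :=
        L.hasFDerivAt.comp_hasDerivAt t hd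
      have h3 : (fun s => L (iteratedDeriv ℓ w s))
          = iteratedDeriv ℓ (fun s i => w s (j, i)) := by
        funext s
        rw [ih (by omega) s]
        rfl
      rw [h3] at h2
      rw [iteratedDeriv_succ, h2.deriv]
      rfl
  -- decomposition of the Kalman term
  have hkal : ∀ t : ℝ, (kalman Bt Mt k).mulVec (w t)
      = ∑ j : Fin k, (Bt ^ (j : ℕ) * Mt).mulVec (fun i => w t (j, i)) := by
    intro t
    funext i
    simp [Matrix.mulVec, dotProduct, kalman, Fintype.sum_prod_type, Finset.sum_apply]
  -- the auxiliary function g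
  set g : ℝ → Fin d → ℂ := fun t => ∑ j : Fin k, ∑ ℓ ∈ Finset.range (j : ℕ),
      (Bt ^ ((j : ℕ) - 1 - ℓ) * Mt).mulVec
        (iteratedDeriv ℓ (fun s i => w s (j, i)) t) with hgdef
  have hgd : ∀ t : ℝ, HasDerivAt g (∑ j : Fin k, ∑ ℓ ∈ Finset.range (j : ℕ),
      (Bt ^ ((j : ℕ) - 1 - ℓ) * Mt).mulVec
        (iteratedDeriv (ℓ + 1) (fun s i => w s (j, i)) t)) t := by
    intro t
    apply HasDerivAt.fun_sum
    intro j _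
    apply HasDerivAt.fun_sum
    intro ℓ hℓ
    have hℓk : ℓ + 2 ≤ k := by
      have h1 := Finset.mem_range.1 hℓ
      have h2 := j.2
      omega
    exact mulVecD _ _ _ t (hder j ℓ hℓk t)
  have hgvan : ∀ t : ℝ, (∀ j : ℕ, j + 2 ≤ k → iteratedDeriv j w t = 0) → g t = 0 := by
    intro t ht
    rw [hgdef]
    apply Finset.sum_eq_zero
    intro j _
    apply Finset.sum_eq_zero
    intro ℓ hℓ
    have hℓk : ℓ + 2 ≤ k := by
      have h1 := Finset.mem_range.1 hℓ
      have h2 := j.2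
      omega
    rw [hcomm j ℓ (by omega) t]
    simp only [ht ℓ hℓk, Pi.zero_apply]
    rw [show (fun _ : Fin m => (0 : ℂ)) = 0 from rfl, Matrix.mulVec_zero]
  have hg0 : g 0 = 0 := hgvan 0 fun j hj => (hwbd j hj).1
  have hgT : g T = 0 := hgvan T fun j hj => (hwbd j hj).2
  -- core algebraic identity
  have core : ∀ t : ℝ,
      (kalman Bt Mt k).mulVec (w t)
        - Mt.mulVec (∑ j : Fin k, iteratedDeriv (j : ℕ) (fun s i => w s (j, i)) t)
        + ∑ j : Fin k, ∑ ℓ ∈ Finset.range (j : ℕ),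
            (Bt ^ ((j : ℕ) - 1 - ℓ) * Mt).mulVec
              (iteratedDeriv (ℓ + 1) (fun s i => w s (j, i)) t)
      = Bt.mulVec (g t) := by
    intro t
    have hBg : Bt.mulVec (g t) = ∑ j : Fin k, ∑ ℓ ∈ Finset.range (j : ℕ),
        (Bt ^ ((j : ℕ) - ℓ) * Mt).mulVec
          (iteratedDeriv ℓ (fun s i => w s (j, i)) t) := by
      rw [hgdef]
      rw [mulVec_sum]
      apply Finset.sum_congr rfl
      intro j _
      rw [mulVec_sum]
      apply Finset.sum_congr rfl
      intro ℓ hℓ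
      rw [Matrix.mulVec_mulVec, ← Matrix.mul_assoc, ← pow_succ']
      have he : (j : ℕ) - 1 - ℓ + 1 = (j : ℕ) - ℓ := by
        have := Finset.mem_range.1 hℓ
        omega
      rw [he]
    rw [hkal, hBg, mulVec_sum, ← Finset.sum_sub_distrib, ← Finset.sum_add_distrib]
    apply Finset.sum_congr rfl
    intro j _
    set F : ℕ → Fin d → ℂ := fun ℓ => (Bt ^ ((j : ℕ) - ℓ) * Mt).mulVec
      (iteratedDeriv ℓ (fun s i => w s (j, i)) t) with hF
    have h1 : ∑ ℓ ∈ Finset.range (j : ℕ),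
        (Bt ^ ((j : ℕ) - 1 - ℓ) * Mt).mulVec
          (iteratedDeriv (ℓ + 1) (fun s i => w s (j, i)) t)
        = ∑ ℓ ∈ Finset.range (j : ℕ), F (ℓ + 1) := by
      apply Finset.sum_congr rfl
      intro ℓ _
      simp only [hF]
      have he : (j : ℕ) - (ℓ + 1) = (j : ℕ) - 1 - ℓ := by omega
      rw [he]
    have h2 : ∑ ℓ ∈ Finset.range (j : ℕ), (F ℓ - F (ℓ + 1)) = F 0 - F (j : ℕ) :=
      Finset.sum_range_sub' F (j : ℕ)
    rw [Finset.sum_sub_distrib] at h2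
    have hF0 : F 0 = (Bt ^ (j : ℕ) * Mt).mulVec (fun i => w t (j, i)) := by
      simp only [hF]
      simp [iteratedDeriv_zero]
    have hFj : F (j : ℕ)
        = Mt.mulVec (iteratedDeriv (j : ℕ) (fun s i => w s (j, i)) t) := by
      simp only [hF]
      simp
    rw [h1, ← hF0, ← hFj, ← h2]
    abel
  -- Z := X - Xt + g solves Z' = Bt Z
  set Z : ℝ → Fin d → ℂ := fun t => X t - Xt t + g t with hZdef
  have hZ : ∀ t : ℝ, HasDerivAt Z (Bt.mulVec (Z t)) t := by
    intro t
    have h := ((hX t).sub (hXt t)).add (hgd t)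
    have heq : Bt.mulVec (X t) + (kalman Bt Mt k).mulVec (w t)
        - (Bt.mulVec (Xt t)
          + Mt.mulVec (∑ j : Fin k, iteratedDeriv (j : ℕ) (fun s i => w s (j, i)) t))
        + ∑ j : Fin k, ∑ ℓ ∈ Finset.range (j : ℕ),
            (Bt ^ ((j : ℕ) - 1 - ℓ) * Mt).mulVec
              (iteratedDeriv (ℓ + 1) (fun s i => w s (j, i)) t)
        = Bt.mulVec (Z t) := by
      have hZt : Bt.mulVec (Z t)
          = Bt.mulVec (X t) - Bt.mulVec (Xt t) + Bt.mulVec (g t) := by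
        rw [hZdef]
        simp [Matrix.mulVec_add, Matrix.mulVec_sub]
      rw [hZt, ← core t]
      abel
    rw [heq] at h
    exact h
  -- uniqueness of the ODE Z' = Bt Z, Z 0 = 0
  set L : (Fin d → ℂ) →L[ℝ] (Fin d → ℂ) :=
    LinearMap.toContinuousLinearMap ((Matrix.mulVecLin Bt).restrictScalars ℝ) with hLdef
  have hLapp : ∀ x : Fin d → ℂ, L x = Bt.mulVec x := fun x => rfl
  have hlip : ∀ t : ℝ, LipschitzWith ‖L‖₊ (fun x : Fin d → ℂ => Bt.mulVec x) := by
    intro t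
    have : (fun x : Fin d → ℂ => Bt.mulVec x) = ⇑L := funext fun x => (hLapp x).symm
    rw [this]
    exact L.lipschitz
  have hZcont : ContinuousOn Z (Icc 0 T) :=
    (continuous_iff_continuousAt.2 fun t => (hZ t).continuousAt).continuousOn
  have huniq : EqOn Z (fun _ => (0 : Fin d → ℂ)) (Icc 0 T) := by
    apply ODE_solution_unique (v := fun _ x => Bt.mulVec x) (K := ‖L‖₊) hlip hZcont
      (fun t _ => (hZ t).hasDerivWithinAt) continuousOn_const
    · intro t _
      have : Bt.mulVec (0 : Fin d → ℂ) = 0 := Matrix.mulVec_zero Bt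
      rw [this]
      exact hasDerivWithinAt_const t _ 0
    · rw [hZdef]
      simp [hX0, hXt0, hg0]
  have hZT : Z T = 0 := huniq ⟨le_of_lt hT, le_rfl⟩
  have : X T - Xt T = 0 := by
    have hZv : Z T = X T - Xt T + g T := by rw [hZdef]
    rw [hZv, hgT, add_zero] at hZT
    exact hZT
  exact sub_eq_zero.mp this
end
end

section
/- Let B, A, K ∈ M_d(ℝ), M ∈ M_{d,m}(ℝ), B_n := −n²B − inA − K, and [B_n|M]_k := (M, B_nM, …, B_n^{k−1}M). Assume there exists N ∈ ℕ with rank [B_n|M]_d = d for all |n| ≥ N, and let k₀ be the eventual constant value of k(n) := min{k ≥ 1 : rank [B_n|M]_k = d}. For |n| large, K_n := [B_n|M]_{k₀} has rank d, so K_n·K_n^* ∈ M_d(ℂ) is invertible and the Moore–Penrose right pseudo-inverse K_n^+ := K_n^*·(K_n·K_n^*)^{−1} ∈ M_{k₀m,d}(ℂ) is well defined. Then there exist C > 0 and N' ∈ ℕ such that for all |n| ≥ N', every entry of K_n^+ has modulus at most C·(1+|n|)^{2(k₀−1)(2d−1)}. -/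
open MeasureTheory Real Set Matrix

noncomputable section

namespace Statement11Aux

open Polynomial

lemma eval_map_star (p : Polynomial ℂ) (n : ℤ) :
    (p.map (starRingEnd ℂ)).eval ((n : ℂ)) = starRingEnd ℂ (p.eval ((n : ℂ))) := by
  induction p using Polynomial.induction_on' with
  | add p q hp hq => simp [hp, hq]
  | monomial k a =>
      simp [Polynomial.map_monomial, Polynomial.eval_monomial, _root_.map_mul, _root_.map_pow, map_intCast]

lemma natDegree_matMul_le {α β γ : Type*} [Fintype β] (P : Matrix α β (Polynomial ℂ))
    (Q : Matrix β γ (Polynomial ℂ)) {s t : ℕ} (hP : ∀ i j, (P i j).natDegree ≤ s)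
    (hQ : ∀ i j, (Q i j).natDegree ≤ t) (i : α) (j : γ) :
    ((P * Q) i j).natDegree ≤ s + t := by
  rw [Matrix.mul_apply]
  exact natDegree_sum_le_of_forall_le _ _ fun k _ =>
    natDegree_mul_le.trans (add_le_add (hP i k) (hQ k j))

lemma natDegree_adjugate_le {a : ℕ} (G : Matrix (Fin a) (Fin a) (Polynomial ℂ)) {t : ℕ}
    (hG : ∀ i j, (G i j).natDegree ≤ t) (i j : Fin a) :
    ((Matrix.adjugate G) i j).natDegree ≤ (a - 1) * t := by
  rw [Matrix.adjugate_apply, Matrix.det_apply]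
  refine natDegree_sum_le_of_forall_le _ _ fun σ _ => ?_
  have hsmul : (Equiv.Perm.sign σ) • (∏ k, (G.updateRow j (Pi.single i 1)) (σ k) k)
      = (((Equiv.Perm.sign σ : ℤ) : Polynomial ℂ)) * ∏ k, (G.updateRow j (Pi.single i 1)) (σ k) k := by
    rw [Units.smul_def, zsmul_eq_mul]
  rw [hsmul]
  refine natDegree_mul_le.trans ?_
  rw [Polynomial.natDegree_intCast, zero_add]
  refine (natDegree_prod_le _ _).trans ?_
  set f : Fin a → ℕ := fun k => ((G.updateRow j (Pi.single i 1)) (σ k) k).natDegree with hf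
  have h0 : f (σ⁻¹ j) = 0 := by
    have : σ (σ⁻¹ j) = j := σ.apply_symm_apply j
    simp only [hf, this, Matrix.updateRow_self, Pi.single_apply]
    split <;> simp
  have hsum : ∑ k, f k = ∑ k ∈ Finset.univ.erase (σ⁻¹ j), f k + f (σ⁻¹ j) :=
    (Finset.sum_erase_add _ _ (Finset.mem_univ _)).symm
  rw [hsum, h0, add_zero]
  have hbd : ∀ k ∈ Finset.univ.erase (σ⁻¹ j), f k ≤ t := by
    intro k hk
    have hkne : σ k ≠ j := by
      intro h
      have : k = σ⁻¹ j := by rw [← h]; exact (σ.symm_apply_apply k).symm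
      exact (Finset.mem_erase.1 hk).1 this
    simp only [hf, Matrix.updateRow_ne hkne]
    exact hG _ _
  calc ∑ k ∈ Finset.univ.erase (σ⁻¹ j), f k
      ≤ (Finset.univ.erase (σ⁻¹ j)).card • t := Finset.sum_le_card_nsmul _ _ _ hbd
    _ = (a - 1) * t := by
        rw [Finset.card_erase_of_mem (Finset.mem_univ _), Finset.card_univ, Fintype.card_fin,
          smul_eq_mul]

lemma abs_eval_le {p : Polynomial ℂ} {D : ℕ} (hp : p.natDegree ≤ D) (x : ℂ) :
    ‖p.eval x‖
      ≤ (∑ k ∈ Finset.range (D + 1), ‖p.coeff k‖) * (1 + ‖x‖) ^ D := by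
  rw [Polynomial.eval_eq_sum_range' (Nat.lt_succ_of_le hp)]
  calc ‖∑ k ∈ Finset.range (D + 1), p.coeff k * x ^ k‖
      ≤ ∑ k ∈ Finset.range (D + 1), ‖p.coeff k * x ^ k‖ :=
        norm_sum_le _ _
    _ ≤ ∑ k ∈ Finset.range (D + 1), ‖p.coeff k‖ * (1 + ‖x‖) ^ D := by
        refine Finset.sum_le_sum fun k hk => ?_
        rw [norm_mul, norm_pow]
        refine mul_le_mul_of_nonneg_left ?_ (norm_nonneg _)
        calc ‖x‖ ^ k ≤ (1 + ‖x‖) ^ k := by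
              refine pow_le_pow_left₀ (norm_nonneg _) ?_ _
              linarith [norm_nonneg x]
          _ ≤ (1 + ‖x‖) ^ D := by
              refine pow_le_pow_right₀ ?_ (Nat.lt_succ_iff.1 (Finset.mem_range.1 hk))
              linarith [norm_nonneg x]
    _ = (∑ k ∈ Finset.range (D + 1), ‖p.coeff k‖) * (1 + ‖x‖) ^ D := by
        rw [Finset.sum_mul]

lemma exists_eventual_lb {q : Polynomial ℂ} (hq : q ≠ 0) :
    ∃ c : ℝ, 0 < c ∧ ∃ N₁ : ℕ, ∀ n : ℤ, (N₁ : ℤ) ≤ |n| → c ≤ ‖q.eval ((n : ℂ))‖ := by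
  rcases le_or_gt q.degree 0 with hdeg | hdeg
  · have hc0 : q.coeff 0 ≠ 0 := by
      intro h
      apply hq
      rw [Polynomial.eq_C_of_degree_le_zero hdeg, h, map_zero]
    refine ⟨‖q.coeff 0‖, by simpa using hc0, 0, fun n _ => ?_⟩
    conv_rhs => rw [Polynomial.eq_C_of_degree_le_zero hdeg]
    simp
  · have hz : Filter.Tendsto (fun n : ℤ => ‖((n : ℂ))‖) Filter.cofinite Filter.atTop := by
      have h1 : Filter.Tendsto (fun x : ℝ => ‖x‖) (Filter.cocompact ℝ) Filter.atTop :=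
        tendsto_norm_cocompact_atTop
      have h2 := h1.comp Int.tendsto_coe_cofinite
      have : (fun n : ℤ => ‖((n : ℂ))‖) = (fun x : ℝ => ‖x‖) ∘ (fun n : ℤ => (n : ℝ)) := by
        funext n
        simp [Function.comp, Complex.norm_intCast, Real.norm_eq_abs]
      rw [this]
      exact h2
    have ht := Polynomial.tendsto_norm_atTop q hdeg hz
    have hev : ∀ᶠ n : ℤ in Filter.cofinite, 1 ≤ ‖q.eval ((n : ℂ))‖ := ht.eventually_ge_atTop 1
    rw [Filter.eventually_cofinite] at hev
    classical
    refine ⟨1, one_pos, (hev.toFinset.sup fun n => n.natAbs) + 1, fun n hn => ?_⟩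
    have hnot : n ∉ hev.toFinset := by
      intro hmem
      have h1 : n.natAbs ≤ hev.toFinset.sup fun n => n.natAbs :=
        Finset.le_sup (f := fun n : ℤ => n.natAbs) hmem
      have h2 : ((hev.toFinset.sup fun n => n.natAbs : ℕ) : ℤ) + 1 ≤ (n.natAbs : ℤ) := by
        rw [← Int.abs_eq_natAbs]
        exact_mod_cast hn
      omega
    have : ¬ ¬ (1 ≤ ‖q.eval ((n : ℂ))‖) := by
      simpa [Set.Finite.mem_toFinset] using hnot
    rw [not_not] at this
    simpa using this

open ComplexOrder in
lemma isUnit_gram {d : ℕ} {β : Type*} [Fintype β] (Kn : Matrix (Fin d) β ℂ)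
    (hrank : Kn.rank = d) : IsUnit (Kn * Kn.conjTranspose).det := by
  have h2 : (Kn * Kn.conjTranspose).rank = d := by
    rw [Matrix.rank_self_mul_conjTranspose, hrank]
  have htop : LinearMap.range (Kn * Kn.conjTranspose).mulVecLin = ⊤ := by
    apply Submodule.eq_top_of_finrank_eq
    rw [Module.finrank_fin_fun]
    exact h2
  have hsurj : Function.Surjective (Kn * Kn.conjTranspose).mulVec := by
    intro v
    obtain ⟨w, hw⟩ := (LinearMap.range_eq_top.1 htop) v
    exact ⟨w, by simpa using hw⟩
  exact (Matrix.isUnit_iff_isUnit_det _).1 (Matrix.mulVec_surjective_iff_isUnit.1 hsurj)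

end Statement11Aux

namespace Statement11Aux

open Polynomial

variable {d m : ℕ}

/-- Polynomial version of `BnMat`. -/
noncomputable def BP (B A K : Matrix (Fin d) (Fin d) ℝ) : Matrix (Fin d) (Fin d) (Polynomial ℂ) :=
  Matrix.of fun i j =>
    C (-(B i j : ℂ)) * X ^ 2 + C (-(Complex.I * (A i j : ℂ))) * X + C (-(K i j : ℂ))

lemma BP_natDegree_le (B A K : Matrix (Fin d) (Fin d) ℝ) (i j : Fin d) :
    ((BP B A K) i j).natDegree ≤ 2 := by
  unfold BP
  simp only [Matrix.of_apply]
  compute_degree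

lemma BP_map_eval (B A K : Matrix (Fin d) (Fin d) ℝ) (n : ℤ) :
    (BP B A K).map (Polynomial.eval ((n : ℂ))) = BnMat B A K n := by
  ext i j
  simp only [Matrix.map_apply, BP, Matrix.of_apply, BnMat, Matrix.sub_apply, Matrix.smul_apply,
    smul_eq_mul, Polynomial.eval_add, Polynomial.eval_mul, Polynomial.eval_C,
    Polynomial.eval_pow, Polynomial.eval_X]
  ring

/-- Polynomial version of the matrix `M`. -/
noncomputable def MP (M : Matrix (Fin d) (Fin m) ℝ) : Matrix (Fin d) (Fin m) (Polynomial ℂ) :=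
  M.map fun x => C ((x : ℂ))

lemma MP_map_eval (M : Matrix (Fin d) (Fin m) ℝ) (n : ℤ) :
    (MP M).map (Polynomial.eval ((n : ℂ))) = M.map Complex.ofReal := by
  ext i j
  simp [MP, Matrix.map_apply]

/-- Polynomial version of the Kalman matrix. -/
noncomputable def KP (B A K : Matrix (Fin d) (Fin d) ℝ) (M : Matrix (Fin d) (Fin m) ℝ)
    (k₀ : ℕ) : Matrix (Fin d) (Fin k₀ × Fin m) (Polynomial ℂ) :=
  Matrix.of fun i p => ((BP B A K) ^ (p.1 : ℕ) * MP M) i p.2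

lemma pow_map_eval (B A K : Matrix (Fin d) (Fin d) ℝ) (n : ℤ) (k : ℕ) :
    ((BP B A K) ^ k).map (Polynomial.eval ((n : ℂ))) = (BnMat B A K n) ^ k := by
  have h0 : (Polynomial.eval ((n : ℂ)) : Polynomial ℂ → ℂ)
      = ⇑(Polynomial.evalRingHom ((n : ℂ))) := rfl
  have h := map_pow ((Polynomial.evalRingHom ((n : ℂ))).mapMatrix) (BP B A K) k
  simp only [RingHom.mapMatrix_apply] at h
  rw [h0, h, ← h0, BP_map_eval]

lemma KP_map_eval (B A K : Matrix (Fin d) (Fin d) ℝ) (M : Matrix (Fin d) (Fin m) ℝ)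
    (k₀ : ℕ) (n : ℤ) :
    (KP B A K M k₀).map (Polynomial.eval ((n : ℂ)))
      = kalman (BnMat B A K n) (M.map Complex.ofReal) k₀ := by
  ext i p
  have h0 : (Polynomial.eval ((n : ℂ)) : Polynomial ℂ → ℂ)
      = ⇑(Polynomial.evalRingHom ((n : ℂ))) := rfl
  have hmul : ((BP B A K) ^ (p.1 : ℕ) * MP M).map (Polynomial.eval ((n : ℂ)))
      = (BnMat B A K n) ^ (p.1 : ℕ) * M.map Complex.ofReal := by
    rw [h0, Matrix.map_mul, ← h0, pow_map_eval, MP_map_eval]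
  simp only [Matrix.map_apply, KP, Matrix.of_apply, kalman]
  calc Polynomial.eval ((n : ℂ)) (((BP B A K) ^ (p.1 : ℕ) * MP M) i p.2)
      = (((BP B A K) ^ (p.1 : ℕ) * MP M).map (Polynomial.eval ((n : ℂ)))) i p.2 := rfl
    _ = ((BnMat B A K n) ^ (p.1 : ℕ) * M.map Complex.ofReal) i p.2 := by rw [hmul]

/-- Polynomial version of the conjugate transpose of the Kalman matrix. -/
noncomputable def KPs (B A K : Matrix (Fin d) (Fin d) ℝ) (M : Matrix (Fin d) (Fin m) ℝ)
    (k₀ : ℕ) : Matrix (Fin k₀ × Fin m) (Fin d) (Polynomial ℂ) :=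
  Matrix.of fun p j => ((KP B A K M k₀) j p).map (starRingEnd ℂ)

lemma KPs_map_eval (B A K : Matrix (Fin d) (Fin d) ℝ) (M : Matrix (Fin d) (Fin m) ℝ)
    (k₀ : ℕ) (n : ℤ) :
    (KPs B A K M k₀).map (Polynomial.eval ((n : ℂ)))
      = (kalman (BnMat B A K n) (M.map Complex.ofReal) k₀).conjTranspose := by
  ext p j
  simp only [Matrix.map_apply, KPs, Matrix.of_apply, Matrix.conjTranspose_apply,
    ← KP_map_eval B A K M k₀ n]
  rw [eval_map_star]
  rfl

lemma BP_pow_natDegree_le (B A K : Matrix (Fin d) (Fin d) ℝ) (k : ℕ) :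
    ∀ i j, (((BP B A K) ^ k) i j).natDegree ≤ 2 * k := by
  induction k with
  | zero =>
      intro i j
      rw [pow_zero]
      rcases eq_or_ne i j with h | h
      · subst h; simp [Matrix.one_apply_eq]
      · simp [Matrix.one_apply_ne h]
  | succ k ih =>
      intro i j
      rw [pow_succ]
      have := natDegree_matMul_le ((BP B A K) ^ k) (BP B A K) ih (BP_natDegree_le B A K) i j
      omega

lemma KP_natDegree_le (B A K : Matrix (Fin d) (Fin d) ℝ) (M : Matrix (Fin d) (Fin m) ℝ)
    (k₀ : ℕ) (i : Fin d) (p : Fin k₀ × Fin m) :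
    ((KP B A K M k₀) i p).natDegree ≤ 2 * (k₀ - 1) := by
  have hM : ∀ (i : Fin d) (j : Fin m), ((MP M) i j).natDegree ≤ 0 := by
    intro i j
    simp [MP, Matrix.map_apply]
  have := natDegree_matMul_le ((BP B A K) ^ (p.1 : ℕ)) (MP M)
    (BP_pow_natDegree_le B A K (p.1 : ℕ)) hM i p.2
  have hp : (p.1 : ℕ) ≤ k₀ - 1 := by
    have := p.1.isLt
    omega
  simp only [KP, Matrix.of_apply]
  omega

lemma KPs_natDegree_le (B A K : Matrix (Fin d) (Fin d) ℝ) (M : Matrix (Fin d) (Fin m) ℝ)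
    (k₀ : ℕ) (p : Fin k₀ × Fin m) (j : Fin d) :
    ((KPs B A K M k₀) p j).natDegree ≤ 2 * (k₀ - 1) := by
  simp only [KPs, Matrix.of_apply]
  exact Polynomial.natDegree_map_le.trans (KP_natDegree_le B A K M k₀ j p)

end Statement11Aux

/-- Polynomial bound on the entries of the right pseudo-inverse
`K_n⁺ = K_n^* (K_n K_n^*)⁻¹` of the `k₀`-block Kalman matrix `K_n = [B_n|M]_{k₀}`. -/
theorem statement11
    (d m : ℕ) (B A K : Matrix (Fin d) (Fin d) ℝ) (M : Matrix (Fin d) (Fin m) ℝ)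
    (N : ℕ)
    (hN : ∀ n : ℤ, (N : ℤ) ≤ |n| →
      (kalman (BnMat B A K n) (M.map Complex.ofReal) d).rank = d)
    (k₀ : ℕ) (hk₀ : 1 ≤ k₀) (N₀ : ℕ)
    -- `k₀` is the eventual constant value of `k(n) = min{k ≥ 1 : rank [B_n|M]_k = d}`:
    (hk₀spec : ∀ n : ℤ, (N₀ : ℤ) ≤ |n| →
      ((kalman (BnMat B A K n) (M.map Complex.ofReal) k₀).rank = d ∧
        ∀ k : ℕ, 1 ≤ k → k < k₀ →
          (kalman (BnMat B A K n) (M.map Complex.ofReal) k).rank ≠ d)) :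
    ∃ C : ℝ, 0 < C ∧ ∃ N' : ℕ, ∀ n : ℤ, (N' : ℤ) ≤ |n| →
      (IsUnit (kalman (BnMat B A K n) (M.map Complex.ofReal) k₀ *
        (kalman (BnMat B A K n) (M.map Complex.ofReal) k₀).conjTranspose).det ∧
      ∀ (i : Fin k₀ × Fin m) (j : Fin d),
        ‖(((kalman (BnMat B A K n) (M.map Complex.ofReal) k₀).conjTranspose *
            (kalman (BnMat B A K n) (M.map Complex.ofReal) k₀ *
              (kalman (BnMat B A K n) (M.map Complex.ofReal) k₀).conjTranspose)⁻¹) i j)‖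
          ≤ C * (1 + |(n : ℝ)|) ^ (2 * (k₀ - 1) * (2 * d - 1))) := by
  classical
  -- Part 1: invertibility of the Gram matrix for `|n| ≥ N₀`.
  have hKn : ∀ n : ℤ, (N₀ : ℤ) ≤ |n| →
      IsUnit ((kalman (BnMat B A K n) (M.map Complex.ofReal) k₀ *
        (kalman (BnMat B A K n) (M.map Complex.ofReal) k₀).conjTranspose).det) := by
    intro n hn
    exact Statement11Aux.isUnit_gram _ (hk₀spec n hn).1
  -- Part 2: polynomial bookkeeping.
  set G : Matrix (Fin d) (Fin d) (Polynomial ℂ) :=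
    Statement11Aux.KP B A K M k₀ * Statement11Aux.KPs B A K M k₀ with hG
  set q : Polynomial ℂ := G.det with hqdef
  set Num : Matrix (Fin k₀ × Fin m) (Fin d) (Polynomial ℂ) :=
    Statement11Aux.KPs B A K M k₀ * G.adjugate with hNum
  have h0 : ∀ n : ℤ, (Polynomial.eval ((n : ℂ)) : Polynomial ℂ → ℂ)
      = ⇑(Polynomial.evalRingHom ((n : ℂ))) := fun n => rfl
  have hGeval : ∀ n : ℤ, G.map (Polynomial.eval ((n : ℂ)))
      = kalman (BnMat B A K n) (M.map Complex.ofReal) k₀ *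
        (kalman (BnMat B A K n) (M.map Complex.ofReal) k₀).conjTranspose := by
    intro n
    rw [hG, h0, Matrix.map_mul, ← h0, Statement11Aux.KP_map_eval, Statement11Aux.KPs_map_eval]
  have hdet_eval : ∀ n : ℤ, q.eval ((n : ℂ))
      = (kalman (BnMat B A K n) (M.map Complex.ofReal) k₀ *
        (kalman (BnMat B A K n) (M.map Complex.ofReal) k₀).conjTranspose).det := by
    intro n
    have : q.eval ((n : ℂ)) = (Polynomial.evalRingHom ((n : ℂ))) G.det := rfl
    rw [this, RingHom.map_det, ← hGeval n]
    congr 1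
  have hNum_eval : ∀ n : ℤ, Num.map (Polynomial.eval ((n : ℂ)))
      = (kalman (BnMat B A K n) (M.map Complex.ofReal) k₀).conjTranspose *
        (kalman (BnMat B A K n) (M.map Complex.ofReal) k₀ *
          (kalman (BnMat B A K n) (M.map Complex.ofReal) k₀).conjTranspose).adjugate := by
    intro n
    have hadj : (G.adjugate).map (Polynomial.eval ((n : ℂ)))
        = (G.map (Polynomial.eval ((n : ℂ)))).adjugate := by
      have := RingHom.map_adjugate (Polynomial.evalRingHom ((n : ℂ))) G
      simpa [RingHom.mapMatrix_apply] using this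
    rw [hNum, h0, Matrix.map_mul, ← h0, Statement11Aux.KPs_map_eval, hadj, hGeval n]
  -- degree bounds
  set D : ℕ := 2 * (k₀ - 1) + (d - 1) * (2 * (k₀ - 1) + 2 * (k₀ - 1)) with hD
  have hGdeg : ∀ i j, (G i j).natDegree ≤ 2 * (k₀ - 1) + 2 * (k₀ - 1) :=
    Statement11Aux.natDegree_matMul_le _ _ (Statement11Aux.KP_natDegree_le B A K M k₀)
      (Statement11Aux.KPs_natDegree_le B A K M k₀)
  have hadjdeg : ∀ i j, ((G.adjugate) i j).natDegree ≤ (d - 1) * (2 * (k₀ - 1) + 2 * (k₀ - 1)) :=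
    Statement11Aux.natDegree_adjugate_le G hGdeg
  have hNumdeg : ∀ p j, (Num p j).natDegree ≤ D :=
    Statement11Aux.natDegree_matMul_le _ _ (Statement11Aux.KPs_natDegree_le B A K M k₀) hadjdeg
  -- the determinant polynomial is nonzero
  have hq0 : q ≠ 0 := by
    intro h
    have hu := hKn (N₀ : ℤ) (le_abs_self _)
    rw [← hdet_eval (N₀ : ℤ)] at hu
    rw [h] at hu
    simp at hu
  obtain ⟨c, hc, N₁, hlb⟩ := Statement11Aux.exists_eventual_lb hq0
  -- coefficient bound
  set CN : ℝ := ∑ p : Fin k₀ × Fin m, ∑ j : Fin d,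
    ∑ k ∈ Finset.range (D + 1), ‖(Num p j).coeff k‖ with hCN
  have hCNle : ∀ (p : Fin k₀ × Fin m) (j : Fin d),
      (∑ k ∈ Finset.range (D + 1), ‖(Num p j).coeff k‖) ≤ CN := by
    intro p j
    have h1 : (∑ k ∈ Finset.range (D + 1), ‖(Num p j).coeff k‖)
        ≤ ∑ j' : Fin d, ∑ k ∈ Finset.range (D + 1), ‖(Num p j').coeff k‖ :=
      Finset.single_le_sum (f := fun j' : Fin d =>
        ∑ k ∈ Finset.range (D + 1), ‖(Num p j').coeff k‖)
        (fun j' _ => by positivity) (Finset.mem_univ j)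
    refine h1.trans ?_
    rw [hCN]
    exact Finset.single_le_sum (f := fun p' : Fin k₀ × Fin m =>
      ∑ j' : Fin d, ∑ k ∈ Finset.range (D + 1), ‖(Num p' j').coeff k‖)
      (fun p' _ => Finset.sum_nonneg fun _ _ => Finset.sum_nonneg fun _ _ => norm_nonneg _)
      (Finset.mem_univ p)
  have hCN0 : 0 ≤ CN := by positivity
  refine ⟨(CN + 1) / c, by positivity, max N₀ N₁, fun n hn => ?_⟩
  have hnN₀ : (N₀ : ℤ) ≤ |n| :=
    le_trans (by exact_mod_cast (le_max_left N₀ N₁)) hn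
  have hnN₁ : (N₁ : ℤ) ≤ |n| :=
    le_trans (by exact_mod_cast (le_max_right N₀ N₁)) hn
  refine ⟨hKn n hnN₀, fun i j => ?_⟩
  set Kmat := kalman (BnMat B A K n) (M.map Complex.ofReal) k₀ with hKmat
  have hu := hKn n hnN₀
  have hinv : (Kmat * Kmat.conjTranspose)⁻¹
      = ((Kmat * Kmat.conjTranspose).det)⁻¹ • (Kmat * Kmat.conjTranspose).adjugate := by
    rw [Matrix.inv_def, Ring.inverse_eq_inv]
  have hentry : (Kmat.conjTranspose * (Kmat * Kmat.conjTranspose)⁻¹) i j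
      = ((Kmat * Kmat.conjTranspose).det)⁻¹ * ((Num.map (Polynomial.eval ((n : ℂ)))) i j) := by
    rw [hinv, Matrix.mul_smul, Matrix.smul_apply, smul_eq_mul, hNum_eval n]
  rw [hentry, norm_mul, norm_inv]
  -- bound the two factors
  have hlbn : c ≤ ‖q.eval ((n : ℂ))‖ := hlb n hnN₁
  have hdet : ‖(Kmat * Kmat.conjTranspose).det‖
      = ‖q.eval ((n : ℂ))‖ := by rw [hdet_eval n]
  have h1 : (‖(Kmat * Kmat.conjTranspose).det‖)⁻¹ ≤ c⁻¹ := by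
    rw [hdet]
    exact inv_anti₀ hc hlbn
  have h2 : ‖(Num.map (Polynomial.eval ((n : ℂ)))) i j‖
      ≤ CN * (1 + |(n : ℝ)|) ^ D := by
    have h3 : ((Num.map (Polynomial.eval ((n : ℂ)))) i j) = (Num i j).eval ((n : ℂ)) := rfl
    rw [h3]
    have h4 := Statement11Aux.abs_eval_le (hNumdeg i j) ((n : ℂ))
    rw [Complex.norm_intCast] at h4
    refine h4.trans ?_
    have h5 : (0 : ℝ) ≤ (1 + |(n : ℝ)|) ^ D := by positivity
    exact mul_le_mul_of_nonneg_right (hCNle i j) h5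
  have hDE : D = 2 * (k₀ - 1) * (2 * d - 1) := by
    have hd1 : 0 < d := j.pos
    obtain ⟨e, rfl⟩ : ∃ e, d = e + 1 := ⟨d - 1, by omega⟩
    have he : 2 * (e + 1) - 1 = 2 * e + 1 := by omega
    simp only [hD, Nat.add_sub_cancel, he]
    ring
  calc (‖(Kmat * Kmat.conjTranspose).det‖)⁻¹ *
        ‖(Num.map (Polynomial.eval ((n : ℂ)))) i j‖
      ≤ c⁻¹ * (CN * (1 + |(n : ℝ)|) ^ D) := by
        refine mul_le_mul h1 h2 (norm_nonneg _) (by positivity)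
    _ = (CN / c) * (1 + |(n : ℝ)|) ^ D := by ring
    _ ≤ ((CN + 1) / c) * (1 + |(n : ℝ)|) ^ D := by
        have hy : (0:ℝ) ≤ (1 + |(n : ℝ)|) ^ D := by positivity
        have hdd : CN / c ≤ (CN + 1) / c := (div_le_div_iff_of_pos_right hc).mpr (by linarith)
        exact mul_le_mul_of_nonneg_right hdd hy
    _ = ((CN + 1) / c) * (1 + |(n : ℝ)|) ^ (2 * (k₀ - 1) * (2 * d - 1)) := by rw [hDE]
end
end

section
/- Let d ≥ 1, 1 ≤ m ≤ d, B, A, K ∈ M_d(ℝ), M ∈ M_{d,m}(ℝ), B_n := −n²B − inA − K ∈ M_d(ℂ), and [B_n|M] := (M, B_nM, …, B_n^{d−1}M). Let ω ⊆ 𝕋 be a nonempty open set, ε > 0 and n₀ ∈ ℕ. For each n with |n| ≤ n₀ let X_n ∈ ℂ^d belong to the column span of [B_n|M] over ℂ. If Mᵀ·(Σ_{|n|≤n₀} exp(t·B_n^*)·X_n·e^{inx}) = 0 for every t ∈ (0,ε) and every x ∈ ω, then X_n = 0 for all |n| ≤ n₀. -/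
open MeasureTheory Real Set Matrix

noncomputable section

lemma fourier_torus (n : ℤ) (x : ℝ) :
    fourier n (x : Torus) = Complex.exp (Complex.I * n * x) := by
  rw [fourier_coe_apply]
  congr 1
  have hπ : (2 * (π:ℂ)) ≠ 0 := by
    simp [Real.pi_ne_zero]
  field_simp
  push_cast
  ring

lemma trig_coeff_zero (n₀ : ℕ) (c : ℤ → ℂ) (ω : Set Torus) (hω : IsOpen ω)
    (hωne : ω.Nonempty)
    (h : ∀ x ∈ ω, ∑ n ∈ Finset.Icc (-(n₀ : ℤ)) (n₀ : ℤ), fourier n x * c n = 0) :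
    ∀ n ∈ Finset.Icc (-(n₀ : ℤ)) (n₀ : ℤ), c n = 0 := by
  -- pull back to ℝ
  have hcont : Continuous ((↑) : ℝ → Torus) := AddCircle.continuous_mk' (2 * Real.pi)
  set U : Set ℝ := ((↑) : ℝ → Torus) ⁻¹' ω with hU
  have hUopen : IsOpen U := hω.preimage hcont
  obtain ⟨y, hy⟩ := hωne
  obtain ⟨x₀, hx₀⟩ := QuotientAddGroup.mk_surjective y
  have hx₀U : x₀ ∈ U := by simp [hU, hx₀, hy]
  obtain ⟨δ, hδpos, hball⟩ := Metric.isOpen_iff.mp hUopen x₀ hx₀U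
  set δ' : ℝ := min δ 1 with hδ'
  have hδ'pos : 0 < δ' := lt_min hδpos one_pos
  have hδ'le : δ' ≤ 1 := min_le_right _ _
  have hIoo : Set.Ioo (x₀ - δ') (x₀ + δ') ⊆ U := by
    intro x hx
    apply hball
    rw [Metric.mem_ball, Real.dist_eq, abs_lt]
    constructor
    · linarith [hx.1, min_le_left δ 1]
    · linarith [hx.2, min_le_left δ 1]
  -- the polynomial
  set p : Polynomial ℂ :=
    ∑ k ∈ Finset.range (2 * n₀ + 1), Polynomial.C (c ((k : ℤ) - n₀)) * Polynomial.X ^ k with hp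
  have hroot : ∀ x ∈ Set.Ioo (x₀ - δ') (x₀ + δ'),
      p.IsRoot (Complex.exp (Complex.I * x)) := by
    intro x hx
    have hxω : (x : Torus) ∈ ω := hIoo hx
    have h0 := h _ hxω
    have heval : p.eval (Complex.exp (Complex.I * x))
        = Complex.exp (Complex.I * n₀ * x) *
          ∑ n ∈ Finset.Icc (-(n₀ : ℤ)) (n₀ : ℤ), fourier n (x : Torus) * c n := by
      rw [hp]
      simp only [Polynomial.eval_finset_sum, Polynomial.eval_mul, Polynomial.eval_C,
        Polynomial.eval_pow, Polynomial.eval_X]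
      rw [Finset.mul_sum]
      refine Finset.sum_nbij' (fun k => (k : ℤ) - n₀) (fun n => (n + n₀).toNat) ?_ ?_ ?_ ?_ ?_
      · intro k hk
        simp only [Finset.mem_range] at hk
        simp only [Finset.mem_Icc]
        omega
      · intro n hn
        simp only [Finset.mem_Icc] at hn
        simp only [Finset.mem_range]
        omega
      · intro k hk
        simp only [Finset.mem_range] at hk
        show (((k : ℤ) - n₀) + n₀).toNat = k
        omega
      · intro n hn
        simp only [Finset.mem_Icc] at hn
        show (((n + n₀).toNat : ℤ)) - n₀ = n
        omega
      · intro k hk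
        simp only [Finset.mem_range] at hk
        rw [fourier_torus]
        rw [← Complex.exp_nat_mul, ← mul_assoc]
        have hsplit : Complex.exp ((k : ℂ) * Complex.I * x)
            = Complex.exp (Complex.I * (((k : ℤ) - (n₀ : ℤ) : ℤ) : ℂ) * x) *
              Complex.exp (Complex.I * n₀ * x) := by
          rw [← Complex.exp_add]
          congr 1
          push_cast
          ring
        rw [hsplit]
        ring
    rw [Polynomial.IsRoot, heval, h0, mul_zero]
  have hinj : Set.InjOn (fun x : ℝ => Complex.exp (Complex.I * x))
      (Set.Ioo (x₀ - δ') (x₀ + δ')) := by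
    intro a ha b hb hab
    simp only at hab
    rw [Complex.exp_eq_exp_iff_exists_int] at hab
    obtain ⟨k, hk⟩ := hab
    have : ((a : ℂ) - b) = k * (2 * π) := by
      have := hk
      have hI : (Complex.I) ≠ 0 := Complex.I_ne_zero
      field_simp at this ⊢
      -- I * a = I * b + k * (2πI)
      have h2 : Complex.I * a - Complex.I * b = k * (2 * π * Complex.I) := by
        linear_combination Complex.I * this
      have h3 : Complex.I * ((a : ℂ) - b - k * (2 * π)) = 0 := by ring_nf; linear_combination h2
      rcases mul_eq_zero.mp h3 with h | h
      · exact absurd h hI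
      · linear_combination h
    have hre : a - b = k * (2 * π) := by exact_mod_cast this
    have hsmall : |a - b| < 2 * π := by
      have h2 : (0:ℝ) < 2 * π := by positivity
      have := ha.1; have := ha.2; have := hb.1; have := hb.2
      have hπ1 : (1:ℝ) < π := by
        have := Real.pi_gt_three; linarith
      rw [abs_lt]; constructor <;> nlinarith
    have hk0 : k = 0 := by
      by_contra hk0
      have : (1:ℝ) ≤ |(k:ℝ)| := by
        have h1 : (1:ℤ) ≤ |k| := Int.one_le_abs (by omega)
        calc (1:ℝ) = ((1:ℤ):ℝ) := by norm_num
        _ ≤ ((|k|:ℤ):ℝ) := by exact_mod_cast h1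
        _ = |(k:ℝ)| := by push_cast; ring
      rw [hre, abs_mul] at hsmall
      have h2 : (0:ℝ) < 2*π := by positivity
      rw [abs_of_pos h2] at hsmall
      nlinarith
    rw [hk0] at hre
    simp at hre
    linarith
  have hpz : p = 0 := by
    apply Polynomial.eq_zero_of_infinite_isRoot
    apply Set.Infinite.mono (s := (fun x : ℝ => Complex.exp (Complex.I * x)) ''
        Set.Ioo (x₀ - δ') (x₀ + δ'))
    · rintro z ⟨x, hx, rfl⟩
      exact hroot x hx
    · exact Set.Infinite.image hinj (Set.Ioo_infinite (by linarith))
  intro n hn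
  simp only [Finset.mem_Icc] at hn
  have hco := congrArg (fun q : Polynomial ℂ => q.coeff (n + n₀).toNat) hpz
  simp only [hp, Polynomial.finset_sum_coeff, Polynomial.coeff_C_mul, Polynomial.coeff_X_pow,
    Polynomial.coeff_zero, mul_ite, mul_one, mul_zero] at hco
  rw [Finset.sum_ite_eq (Finset.range (2 * n₀ + 1)) ((n + n₀).toNat)] at hco
  have hmem : (n + n₀).toNat ∈ Finset.range (2 * n₀ + 1) := by
    simp only [Finset.mem_range]; omega
  rw [if_pos hmem] at hco
  have : ((n + n₀).toNat : ℤ) - n₀ = n := by omega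
  rwa [this] at hco



attribute [local instance] Matrix.linftyOpNormedAddCommGroup Matrix.linftyOpNormedRing
  Matrix.linftyOpNormedAlgebra

/-- The continuous linear map `W ↦ (Mt *ᵥ (W *ᵥ v)) j` on matrices. -/
def obsCLM {d m : ℕ} (Mt : Matrix (Fin m) (Fin d) ℂ) (v : Fin d → ℂ) (j : Fin m) :
    Matrix (Fin d) (Fin d) ℂ →L[ℂ] ℂ :=
  LinearMap.toContinuousLinearMap
    { toFun := fun W => Mt.mulVec (W.mulVec v) j
      map_add' := by
        intro W₁ W₂
        simp [Matrix.add_mulVec, Matrix.mulVec_add]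
      map_smul' := by
        intro a W
        simp [Matrix.smul_mulVec, Matrix.mulVec_smul] }

lemma obsCLM_apply {d m : ℕ} (Mt : Matrix (Fin m) (Fin d) ℂ) (v : Fin d → ℂ) (j : Fin m)
    (W : Matrix (Fin d) (Fin d) ℂ) : obsCLM Mt v j W = Mt.mulVec (W.mulVec v) j := rfl

lemma exp_analytic' {d : ℕ} (A : Matrix (Fin d) (Fin d) ℂ) (z : ℂ) :
    AnalyticAt ℂ (fun w : ℂ => NormedSpace.exp (w • A)) z := by
  have h1 : AnalyticAt ℂ (NormedSpace.exp :
      Matrix (Fin d) (Fin d) ℂ → Matrix (Fin d) (Fin d) ℂ) (z • A) := by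
    apply NormedSpace.analyticAt_exp_of_mem_ball
    rw [NormedSpace.expSeries_radius_eq_top]
    exact edist_lt_top _ _
  have h2 : AnalyticAt ℂ (fun w : ℂ => w • A) z := by
    have := (ContinuousLinearMap.analyticAt
      ((ContinuousLinearMap.id ℂ ℂ).smulRight A) z)
    exact this
  exact AnalyticAt.comp (g := NormedSpace.exp) (f := fun w : ℂ => w • A) h1 h2

lemma exp_obs_zero {d m : ℕ} (A : Matrix (Fin d) (Fin d) ℂ) (Mt : Matrix (Fin m) (Fin d) ℂ)
    (v : Fin d → ℂ) (ε : ℝ) (hε : 0 < ε)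
    (h : ∀ t ∈ Set.Ioo (0 : ℝ) ε,
      Mt.mulVec ((NormedSpace.exp ((t : ℂ) • A)).mulVec v) = 0) :
    ∀ k : ℕ, Mt.mulVec ((A ^ k).mulVec v) = 0 := by
  -- Step 1: the observation vanishes for all complex times.
  have hall : ∀ (Mt' : Matrix (Fin m) (Fin d) ℂ),
      (∀ t ∈ Set.Ioo (0 : ℝ) ε,
        Mt'.mulVec ((NormedSpace.exp ((t : ℂ) • A)).mulVec v) = 0) →
      ∀ z : ℂ, Mt'.mulVec ((NormedSpace.exp (z • A)).mulVec v) = 0 := by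
    intro Mt' h' z
    funext j
    set f : ℂ → ℂ := fun w => obsCLM Mt' v j (NormedSpace.exp (w • A)) with hf
    have hfan : AnalyticOnNhd ℂ f Set.univ := by
      intro w _
      exact ((obsCLM Mt' v j).analyticAt _).comp (exp_analytic' A w)
    set u : ℕ → ℝ := fun k => ε / 2 + ε / (4 * (k + 1)) with hu
    have hupos : ∀ k : ℕ, 0 < ε / (4 * ((k : ℝ) + 1)) := by
      intro k
      apply div_pos hε
      positivity
    have humem : ∀ k : ℕ, u k ∈ Set.Ioo (0 : ℝ) ε := by
      intro k
      have h1 := hupos k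
      have h2 : ε / (4 * ((k : ℝ) + 1)) ≤ ε / 4 := by
        apply div_le_div_of_nonneg_left (le_of_lt hε) (by norm_num)
        have : (0:ℝ) ≤ (k:ℝ) := Nat.cast_nonneg k
        nlinarith
      constructor
      · simp only [hu]; linarith
      · simp only [hu]; linarith
    have hune : ∀ k : ℕ, ((u k : ℝ) : ℂ) ≠ ((ε / 2 : ℝ) : ℂ) := by
      intro k
      rw [Ne, Complex.ofReal_inj]
      have := hupos k
      simp only [hu]
      intro hcontra
      linarith
    have hutend : Filter.Tendsto (fun k : ℕ => ((u k : ℝ) : ℂ)) Filter.atTop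
        (nhdsWithin ((ε / 2 : ℝ) : ℂ) {((ε / 2 : ℝ) : ℂ)}ᶜ) := by
      apply tendsto_nhdsWithin_of_tendsto_nhds_of_eventually_within
      · apply Filter.Tendsto.comp (Complex.continuous_ofReal.tendsto _)
        have h0 : Filter.Tendsto (fun k : ℕ => ε / (4 * ((k : ℝ) + 1)))
            Filter.atTop (nhds 0) := by
          have h4 : Filter.Tendsto (fun k : ℕ => (ε / 4) * (1 / ((k : ℝ) + 1)))
              Filter.atTop (nhds ((ε / 4) * 0)) :=
            tendsto_one_div_add_atTop_nhds_zero_nat.const_mul (ε / 4)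
          rw [mul_zero] at h4
          convert h4 using 2 with k
          field_simp
        have h5 := h0.const_add (ε / 2)
        rw [add_zero] at h5
        simpa [hu] using h5
      · exact Filter.Eventually.of_forall fun k => hune k
    have hfreq : ∃ᶠ z in nhdsWithin ((ε / 2 : ℝ) : ℂ) {((ε / 2 : ℝ) : ℂ)}ᶜ, f z = 0 := by
      apply hutend.frequently
      apply Filter.Eventually.frequently
      apply Filter.Eventually.of_forall
      intro k
      have hk := h' (u k) (humem k)
      simp only [hf, obsCLM_apply, hk, Pi.zero_apply]
    have heq := hfan.eqOn_zero_of_preconnected_of_frequently_eq_zero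
      isPreconnected_univ (Set.mem_univ _) hfreq
    have hfz := heq (Set.mem_univ z)
    simpa [hf, obsCLM_apply] using hfz
  -- Step 2: induction on k, differentiating in z.
  have hind : ∀ k : ℕ, ∀ z : ℂ,
      (Mt * A ^ k).mulVec ((NormedSpace.exp (z • A)).mulVec v) = 0 := by
    intro k
    induction k with
    | zero =>
      intro z
      rw [pow_zero, Matrix.mul_one]
      exact hall Mt h z
    | succ k ih =>
      intro z
      funext j
      set g : ℂ → ℂ := fun w => obsCLM (Mt * A ^ k) v j (NormedSpace.exp (w • A)) with hg
      have hg0 : g = fun _ => 0 := by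
        funext w
        simp only [hg, obsCLM_apply]
        rw [ih w]
        rfl
      have hd0 : HasDerivAt g 0 z := by
        rw [hg0]; exact hasDerivAt_const _ _
      have hexp : HasDerivAt (fun w : ℂ => NormedSpace.exp (w • A))
          (NormedSpace.exp (z • A) * A) z := hasDerivAt_exp_smul_const A z
      have hdL : HasDerivAt g
          (obsCLM (Mt * A ^ k) v j (NormedSpace.exp (z • A) * A)) z :=
        ((obsCLM (Mt * A ^ k) v j).hasFDerivAt).comp_hasDerivAt z hexp
      have hval : obsCLM (Mt * A ^ k) v j (NormedSpace.exp (z • A) * A) = 0 :=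
        hdL.unique hd0
      have hcomm : NormedSpace.exp (z • A) * A = A * NormedSpace.exp (z • A) :=
        (((Commute.refl A).smul_left z).exp_left).eq
      rw [obsCLM_apply, hcomm] at hval
      rw [Matrix.mulVec_mulVec] at hval ⊢
      have hassoc : Mt * A ^ (k + 1) * NormedSpace.exp (z • A)
          = Mt * A ^ k * (A * NormedSpace.exp (z • A)) := by
        rw [pow_succ, ← Matrix.mul_assoc, Matrix.mul_assoc (Mt * A ^ k) A]
      rw [hassoc]
      exact hval
  intro k
  have hk0 := hind k 0
  rw [zero_smul, NormedSpace.exp_zero, Matrix.one_mulVec] at hk0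
  rw [Matrix.mulVec_mulVec]
  exact hk0

lemma kalman_obs_zero {d m : ℕ} (Bn : Matrix (Fin d) (Fin d) ℂ)
    (M' : Matrix (Fin d) (Fin m) ℂ)
    (hM' : ∀ i j, (starRingEnd ℂ) (M' i j) = M' i j) (X : Fin d → ℂ)
    (y : Fin d × Fin m → ℂ) (hXy : (kalman Bn M' d).mulVec y = X)
    (hk : ∀ k : ℕ, M'.transpose.mulVec ((Bn.conjTranspose ^ k).mulVec X) = 0) :
    X = 0 := by
  have hMH : M'.conjTranspose = M'.transpose := by
    ext i j
    simp [Matrix.conjTranspose_apply, Matrix.transpose_apply, hM']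
  have hCk : ∀ k : ℕ, ((Bn ^ k * M').conjTranspose).mulVec X = 0 := by
    intro k
    have h1 := hk k
    rw [Matrix.mulVec_mulVec] at h1
    have h2 : (Bn ^ k * M').conjTranspose = M'.transpose * Bn.conjTranspose ^ k := by
      rw [Matrix.conjTranspose_mul, hMH]
      congr 1
      rw [← Matrix.star_eq_conjTranspose, ← Matrix.star_eq_conjTranspose, star_pow]
    rw [h2, ← Matrix.mulVec_mulVec]
    rw [Matrix.mulVec_mulVec]
    exact h1
  have hKalH : (kalman Bn M' d).conjTranspose.mulVec X = 0 := by
    funext p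
    have h6 := congrFun (hCk p.1) p.2
    simp only [Pi.zero_apply] at h6 ⊢
    rw [← h6]
    simp only [Matrix.mulVec, dotProduct, Matrix.conjTranspose_apply]
    apply Finset.sum_congr rfl
    intro i _
    congr 1
  have hdot : star X ⬝ᵥ X = 0 := by
    have hstep : star X ⬝ᵥ X = star X ⬝ᵥ (kalman Bn M' d *ᵥ y) := by rw [hXy]
    rw [hstep, Matrix.dotProduct_mulVec]
    have : star X ᵥ* (kalman Bn M' d) = 0 := by
      have h3 := congrArg star hKalH
      rw [Matrix.star_mulVec, Matrix.conjTranspose_conjTranspose] at h3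
      rw [h3]
      exact star_zero _
    rw [this, zero_dotProduct]
  have hsum : ∑ i, Complex.normSq (X i) = 0 := by
    have h4 : ((∑ i, Complex.normSq (X i) : ℝ) : ℂ) = 0 := by
      push_cast
      rw [← hdot]
      simp only [dotProduct, Pi.star_apply, Complex.star_def]
      apply Finset.sum_congr rfl
      intro i _
      rw [← Complex.mul_conj, mul_comm]
    exact_mod_cast h4
  funext i
  have h5 : Complex.normSq (X i) = 0 := by
    have := (Finset.sum_eq_zero_iff_of_nonneg
      (fun i _ => Complex.normSq_nonneg (X i))).mp hsum i (Finset.mem_univ i)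
    exact this
  exact Complex.normSq_eq_zero.mp h5

/-- Unique continuation for low frequencies of the adjoint system: if the
observation `Mᵀ(Σ_{|n|≤n₀} e^{tB_n^*} X_n e^{inx})` vanishes on `(0,ε) × ω` and each `X_n`
lies in the column span of the Kalman matrix `[B_n|M]`, then all `X_n` vanish. -/
theorem statement14
    (d m : ℕ) (hd : 1 ≤ d) (hm : 1 ≤ m) (hmd : m ≤ d)
    (B A K : Matrix (Fin d) (Fin d) ℝ) (M : Matrix (Fin d) (Fin m) ℝ)
    (ω : Set Torus) (hω : IsOpen ω) (hωne : ω.Nonempty)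
    (ε : ℝ) (hε : 0 < ε) (n₀ : ℕ)
    (X : ℤ → Fin d → ℂ)
    (hX : ∀ n : ℤ, |n| ≤ (n₀ : ℤ) →
      ∃ y : Fin d × Fin m → ℂ,
        (kalman (BnMat B A K n) (M.map Complex.ofReal) d).mulVec y = X n)
    (hobs : ∀ t ∈ Set.Ioo (0 : ℝ) ε, ∀ x ∈ ω,
      (M.map Complex.ofReal).transpose.mulVec
        (∑ n ∈ Finset.Icc (-(n₀ : ℤ)) (n₀ : ℤ),
          fourier n x •
            (NormedSpace.exp ((t : ℂ) • (BnMat B A K n).conjTranspose)).mulVec (X n)) = 0) :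
    ∀ n : ℤ, |n| ≤ (n₀ : ℤ) → X n = 0 := by
  intro n hn
  have hcomp : ∀ t ∈ Set.Ioo (0 : ℝ) ε, ∀ q ∈ Finset.Icc (-(n₀ : ℤ)) (n₀ : ℤ),
      (M.map Complex.ofReal).transpose.mulVec
        ((NormedSpace.exp ((t : ℂ) • (BnMat B A K q).conjTranspose)).mulVec (X q)) = 0 := by
    intro t ht q hq
    funext j
    exact trig_coeff_zero n₀
      (fun q' => ((M.map Complex.ofReal).transpose.mulVec
        ((NormedSpace.exp ((t : ℂ) • (BnMat B A K q').conjTranspose)).mulVec (X q'))) j)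
      ω hω hωne
      (by
        intro x hx
        have h0 := congrFun (hobs t ht x hx) j
        simp only [Pi.zero_apply] at h0
        rw [← h0]
        simp only [Matrix.mulVec, dotProduct, Finset.sum_apply, Pi.smul_apply,
          smul_eq_mul, Finset.mul_sum]
        rw [Finset.sum_comm]
        apply Finset.sum_congr rfl
        intro q' _
        apply Finset.sum_congr rfl
        intro i _
        apply Finset.sum_congr rfl
        intro i' _
        ring) q hq
  have hqmem : n ∈ Finset.Icc (-(n₀ : ℤ)) (n₀ : ℤ) := Finset.mem_Icc.mpr (abs_le.mp hn)
  have hk := exp_obs_zero (BnMat B A K n).conjTranspose (M.map Complex.ofReal).transpose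
    (X n) ε hε (fun t ht => hcomp t ht n hqmem)
  obtain ⟨y, hXy⟩ := hX n hn
  exact kalman_obs_zero (BnMat B A K n) (M.map Complex.ofReal)
    (fun i j => by simp [Matrix.map_apply, Complex.conj_ofReal]) (X n) y hXy hk
end
end
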